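/- arXiv:2205.04934 — 6 statements merged into one kernel-verified Lean document; each statement's English description precedes it below -/
import Mathlib

section
/- Define z : ℕ → ℕ × ℕ by bit de-interleaving: if t = Σ_i b_i·2^i with b_i ∈ {0,1}, then z(t) = (x(t), y(t)) where x(t) = Σ_i b_{2i}·2^i and y(t) = Σ_i b_{2i+1}·2^i. Then for every k ≥ 0, Σ_{t=0}^{4^k − 2} ( |x(t+1) − x(t)| + |y(t+1) − y(t)| ) ≤ 3·4^k. -/
/-- `zOrderX t = Σ_i b_{2i}·2^i`, where `t = Σ_i b_i·2^i`: the x-coordinate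
obtained by de-interleaving the bits of `t`. (Bits of index `2i` with `i ≥ t`
vanish since `2^(2i) > t`, so summing over `i < t` captures all bits.) -/
def zOrderX (t : ℕ) : ℕ :=
  ∑ i ∈ Finset.range t, if t.testBit (2 * i) then 2 ^ i else 0

/-- `zOrderY t = Σ_i b_{2i+1}·2^i`: the y-coordinate obtained by
de-interleaving the bits of `t`. -/
def zOrderY (t : ℕ) : ℕ :=
  ∑ i ∈ Finset.range t, if t.testBit (2 * i + 1) then 2 ^ i else 0

namespace ZOrderAux

/-- generic de-interleaving: bits at positions `2i + r`, summed over `i < n`. -/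
def W (r n t : ℕ) : ℕ := ∑ i ∈ Finset.range n, if t.testBit (2 * i + r) then 2 ^ i else 0

lemma four_pow (n : ℕ) : (4:ℕ) ^ n = 2 ^ (2 * n) := by
  rw [pow_mul]; norm_num

lemma W_stable (r : ℕ) {n m t : ℕ} (ht : t < 4 ^ n) (hnm : n ≤ m) : W r m t = W r n t := by
  unfold W
  refine (Finset.sum_subset (Finset.range_subset_range.2 hnm) ?_).symm
  intro i _ hi
  have hi' : n ≤ i := by simpa using hi
  have h2 : t < 2 ^ (2 * i + r) := by
    calc t < 4 ^ n := ht
    _ = 2 ^ (2*n) := four_pow n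
    _ ≤ 2 ^ (2*i + r) := Nat.pow_le_pow_right (by norm_num) (by omega)
  rw [Nat.testBit_lt_two_pow h2, if_neg (by simp)]

lemma zOrderX_eq {n t : ℕ} (ht : t < 4 ^ n) : zOrderX t = W 0 n t := by
  have h1 : t < 4 ^ t := Nat.lt_pow_self (n := t) (by norm_num)
  have e1 : zOrderX t = W 0 t t := by simp [zOrderX, W]
  rw [e1, ← W_stable 0 h1 (le_max_right n t), W_stable 0 ht (le_max_left n t)]

lemma zOrderY_eq {n t : ℕ} (ht : t < 4 ^ n) : zOrderY t = W 1 n t := by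
  have h1 : t < 4 ^ t := Nat.lt_pow_self (n := t) (by norm_num)
  have e1 : zOrderY t = W 1 t t := by simp [zOrderY, W]
  rw [e1, ← W_stable 1 h1 (le_max_right n t), W_stable 1 ht (le_max_left n t)]

lemma W_split (r : ℕ) (hr : r ≤ 1) {n t : ℕ} (ht : t < 2 ^ (2*n)) (u m : ℕ) :
    W r (n + m) (2 ^ (2*n) * u + t) = W r n t + 2 ^ n * W r m u := by
  unfold W
  rw [Finset.sum_range_add, Finset.mul_sum]
  congr 1
  · refine Finset.sum_congr rfl fun i hi => ?_
    have hi' : i < n := Finset.mem_range.1 hi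
    have h := Nat.testBit_two_pow_mul_add u ht (2*i+r)
    rw [if_pos (show 2*i+r < 2*n by omega)] at h
    rw [h]
  · refine Finset.sum_congr rfl fun i hi => ?_
    have h := Nat.testBit_two_pow_mul_add u ht (2*(n+i)+r)
    rw [if_neg (show ¬ (2*(n+i)+r < 2*n) by omega),
        show 2*(n+i)+r - 2*n = 2*i + r by omega] at h
    rw [h]
    split <;> simp [pow_add]

lemma W_zero (r n : ℕ) : W r n 0 = 0 := by simp [W]

lemma sum_two_pow (n : ℕ) : ∑ i ∈ Finset.range n, 2 ^ i = 2 ^ n - 1 := by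
  induction n with
  | zero => simp
  | succ n ih =>
      rw [Finset.sum_range_succ, ih]
      have : 1 ≤ 2 ^ n := Nat.one_le_two_pow
      rw [pow_succ]; omega

lemma W_ones (r : ℕ) (hr : r ≤ 1) (k : ℕ) : W r k (2 ^ (2*k) - 1) = 2 ^ k - 1 := by
  unfold W
  rw [show (∑ i ∈ Finset.range k, if (2^(2*k)-1 : ℕ).testBit (2*i+r) then 2^i else 0)
      = ∑ i ∈ Finset.range k, 2 ^ i from ?_, sum_two_pow]
  refine Finset.sum_congr rfl fun i hi => ?_
  have hi' : i < k := Finset.mem_range.1 hi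
  rw [Nat.testBit_two_pow_sub_one, if_pos (by simp; omega)]

/-- the per-step Manhattan distance -/
def D (t : ℕ) : ℕ :=
  ((zOrderX (t + 1) : ℤ) - zOrderX t).natAbs + ((zOrderY (t + 1) : ℤ) - zOrderY t).natAbs

lemma D_shift {k t u : ℕ} (ht : t + 1 < 4 ^ k) (hu : u < 4) :
    D (2 ^ (2*k) * u + t) = D t := by
  have h4 : (4:ℕ) ^ k = 2 ^ (2*k) := four_pow k
  have ht' : t < 2 ^ (2*k) := by omega
  have ht1 : t + 1 < 2 ^ (2*k) := by omega
  have hb : ∀ s, s < 2 ^ (2*k) → 2 ^ (2*k) * u + s < 4 ^ (k+1) := by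
    intro s hs
    have : (4:ℕ)^(k+1) = 4 * 4 ^ k := by ring
    rw [this, h4]; nlinarith
  unfold D
  rw [show 2 ^ (2*k) * u + t + 1 = 2 ^ (2*k) * u + (t+1) by ring]
  rw [zOrderX_eq (hb _ ht1), zOrderX_eq (hb _ ht'), zOrderY_eq (hb _ ht1), zOrderY_eq (hb _ ht'),
      zOrderX_eq (by omega : t + 1 < 4 ^ k), zOrderX_eq (by omega : t < 4 ^ k),
      zOrderY_eq (by omega : t + 1 < 4 ^ k), zOrderY_eq (by omega : t < 4 ^ k)]
  rw [W_split 0 (by norm_num) ht1, W_split 0 (by norm_num) ht',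
      W_split 1 (by norm_num) ht1, W_split 1 (by norm_num) ht']
  congr 2 <;> push_cast <;> ring

lemma sum_blocks (f : ℕ → ℕ) (M : ℕ) :
    ∑ t ∈ Finset.range (4*(M+1) - 1), f t =
      ((∑ t ∈ Finset.range M, f t) + f M)
      + (((∑ t ∈ Finset.range M, f ((M+1) + t)) + f ((M+1)+M))
      + (((∑ t ∈ Finset.range M, f (2*(M+1) + t)) + f (2*(M+1)+M))
      + (∑ t ∈ Finset.range M, f (3*(M+1) + t)))) := by
  rw [show 4*(M+1) - 1 = (M+1) + ((M+1) + ((M+1) + M)) by omega]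
  rw [Finset.sum_range_add f (M+1) ((M+1) + ((M+1) + M)),
      Finset.sum_range_add (fun x => f ((M+1) + x)) (M+1) ((M+1) + M),
      Finset.sum_range_add (fun x => f ((M+1) + ((M+1) + x))) (M+1) M,
      Finset.sum_range_succ f M,
      Finset.sum_range_succ (fun x => f ((M+1) + x)) M,
      Finset.sum_range_succ (fun x => f ((M+1) + ((M+1) + x))) M]
  simp only [show ∀ x:ℕ, (M+1)+((M+1)+x) = 2*(M+1)+x from fun x => by ring,
             show ∀ x:ℕ, 2*(M+1)+((M+1)+x) = 3*(M+1)+x from fun x => by ring,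
             show ∀ x:ℕ, (M+1)+(2*(M+1)+x) = 3*(M+1)+x from fun x => by ring]

lemma D_conn (k : ℕ) :
    D (2^(2*k) - 1) = 2^k ∧ D (2*2^(2*k) - 1) = 2^(k+1) ∧ D (3*2^(2*k) - 1) = 2^k := by
  have hQ : 1 ≤ (2:ℕ)^(2*k) := Nat.one_le_two_pow
  have hk : 1 ≤ (2:ℕ)^k := Nat.one_le_two_pow
  have h4 : (4:ℕ) ^ k = 2 ^ (2*k) := four_pow k
  have ht' : 2 ^ (2*k) - 1 < 2 ^ (2*k) := by omega
  have hb : ∀ s u, s < 2 ^ (2*k) → u < 4 → 2 ^ (2*k) * u + s < 4 ^ (k+1) := by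
    intro s u hs hu
    have : (4:ℕ)^(k+1) = 4 * 4 ^ k := by ring
    rw [this, h4]; nlinarith
  have xones : ∀ u, u < 4 → zOrderX (2^(2*k) * u + (2^(2*k) - 1)) = (2^k - 1) + 2^k * W 0 1 u := by
    intro u hu
    rw [zOrderX_eq (hb _ _ ht' hu), W_split 0 (by norm_num) ht', W_ones 0 (by norm_num)]
  have yones : ∀ u, u < 4 → zOrderY (2^(2*k) * u + (2^(2*k) - 1)) = (2^k - 1) + 2^k * W 1 1 u := by
    intro u hu
    rw [zOrderY_eq (hb _ _ ht' hu), W_split 1 (by norm_num) ht', W_ones 1 (by norm_num)]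
  have xzero : ∀ u, u < 4 → zOrderX (2^(2*k) * u) = 2^k * W 0 1 u := by
    intro u hu
    have h0 : (0:ℕ) < 2 ^ (2*k) := by positivity
    rw [show zOrderX (2^(2*k) * u) = W 0 (k+1) (2^(2*k)*u) from zOrderX_eq (hb 0 u h0 hu),
        show W 0 (k+1) (2^(2*k)*u) = W 0 k 0 + 2^k * W 0 1 u from W_split 0 (by norm_num) h0 u 1,
        W_zero]
    simp
  have yzero : ∀ u, u < 4 → zOrderY (2^(2*k) * u) = 2^k * W 1 1 u := by
    intro u hu
    have h0 : (0:ℕ) < 2 ^ (2*k) := by positivity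
    rw [show zOrderY (2^(2*k) * u) = W 1 (k+1) (2^(2*k)*u) from zOrderY_eq (hb 0 u h0 hu),
        show W 1 (k+1) (2^(2*k)*u) = W 1 k 0 + 2^k * W 1 1 u from W_split 1 (by norm_num) h0 u 1,
        W_zero]
    simp
  have w00 : W 0 1 0 = 0 := by decide
  have w01 : W 0 1 1 = 1 := by decide
  have w02 : W 0 1 2 = 0 := by decide
  have w03 : W 0 1 3 = 1 := by decide
  have w10 : W 1 1 0 = 0 := by decide
  have w11 : W 1 1 1 = 0 := by decide
  have w12 : W 1 1 2 = 1 := by decide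
  have w13 : W 1 1 3 = 1 := by decide
  refine ⟨?_, ?_, ?_⟩
  · unfold D
    rw [show 2^(2*k) - 1 + 1 = 2^(2*k) * 1 by omega]
    rw [show (2:ℕ)^(2*k) - 1 = 2^(2*k) * 0 + (2^(2*k) - 1) by omega]
    rw [xzero 1 (by norm_num), yzero 1 (by norm_num),
        xones 0 (by norm_num), yones 0 (by norm_num), w01, w11, w00, w10]
    simp only [mul_one, mul_zero, add_zero]
    generalize (2:ℕ)^k = p at hk ⊢
    omega
  · unfold D
    rw [show 2*2^(2*k) - 1 + 1 = 2^(2*k) * 2 by omega]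
    rw [show 2*(2:ℕ)^(2*k) - 1 = 2^(2*k) * 1 + (2^(2*k) - 1) by omega]
    rw [xzero 2 (by norm_num), yzero 2 (by norm_num),
        xones 1 (by norm_num), yones 1 (by norm_num), w02, w12, w01, w11]
    simp only [mul_one, mul_zero, add_zero, pow_succ]
    generalize (2:ℕ)^k = p at hk ⊢
    omega
  · unfold D
    rw [show 3*2^(2*k) - 1 + 1 = 2^(2*k) * 3 by omega]
    rw [show 3*(2:ℕ)^(2*k) - 1 = 2^(2*k) * 2 + (2^(2*k) - 1) by omega]
    rw [xzero 3 (by norm_num), yzero 3 (by norm_num),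
        xones 2 (by norm_num), yones 2 (by norm_num), w03, w13, w02, w12]
    simp only [mul_one, mul_zero, add_zero]
    generalize (2:ℕ)^k = p at hk ⊢
    omega

lemma main_bound (k : ℕ) : (∑ t ∈ Finset.range (4^k - 1), D t) + 2^(k+1) ≤ 2 * 4^k := by
  induction k with
  | zero => simp
  | succ k ih =>
      have h4 : (4:ℕ) ^ k = 2 ^ (2*k) := four_pow k
      have hN : 1 ≤ (4:ℕ)^k := Nat.one_le_pow _ _ (by norm_num)
      have hblocks := sum_blocks D (4^k - 1)
      rw [show 4*((4^k-1)+1) - 1 = 4^(k+1) - 1 by rw [pow_succ]; omega] at hblocks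
      have hshift : ∀ m, m < 4 → (∑ t ∈ Finset.range (4^k - 1), D (m*((4^k-1)+1) + t))
          = ∑ t ∈ Finset.range (4^k - 1), D t := by
        intro m hm
        refine Finset.sum_congr rfl fun t ht => ?_
        have ht' : t < 4^k - 1 := Finset.mem_range.1 ht
        rw [show m*((4^k-1)+1) + t = 2^(2*k) * m + t by
          rw [show (4^k:ℕ)-1+1 = 4^k by omega, h4]; ring]
        exact D_shift (by omega) hm
      obtain ⟨c1, c2, c3⟩ := D_conn k
      rw [← h4] at c1 c2 c3
      rw [hblocks]
      have e1 : (∑ t ∈ Finset.range (4^k - 1), D ((4^k-1)+1 + t))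
          = ∑ t ∈ Finset.range (4^k - 1), D t := by
        rw [show (∑ t ∈ Finset.range (4^k - 1), D ((4^k-1)+1 + t))
            = ∑ t ∈ Finset.range (4^k - 1), D (1*((4^k-1)+1) + t) by
              exact Finset.sum_congr rfl fun t _ => by rw [one_mul]]
        exact hshift 1 (by norm_num)
      rw [e1, hshift 2 (by norm_num), hshift 3 (by norm_num),
          show (4^k-1)+1 + (4^k-1) = 2*4^k - 1 by omega,
          show 2*((4^k-1)+1) + (4^k-1) = 3*4^k - 1 by omega,
          c1, c2, c3]
      have h2 : (2:ℕ)^(k+1) = 2 * 2^k := by ring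
      have h2' : (2:ℕ)^(k+1+1) = 4 * 2^k := by ring
      have h44 : (4:ℕ)^(k+1) = 4 * 4^k := by ring
      rw [h2', h44, h2]
      rw [h2] at ih
      generalize (∑ t ∈ Finset.range (4^k - 1), D t) = S at ih ⊢
      generalize (2:ℕ)^k = p at ih ⊢
      generalize (4:ℕ)^k = q at ih ⊢
      omega

end ZOrderAux

/-- Traversing the `2^k × 2^k` grid along the Z-order (Morton) curve
`t ↦ (zOrderX t, zOrderY t)` has total Manhattan length at most `3·4^k`. -/
theorem zorder_total_length (k : ℕ) :
    ∑ t ∈ Finset.range (4 ^ k - 1),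
        (((zOrderX (t + 1) : ℤ) - zOrderX t).natAbs +
          ((zOrderY (t + 1) : ℤ) - zOrderY t).natAbs)
      ≤ 3 * 4 ^ k := by
  have h := ZOrderAux.main_bound k
  unfold ZOrderAux.D at h
  have h2 : 2 * 4^k ≤ 3 * 4^k := Nat.mul_le_mul_right _ (by norm_num)
  rw [pow_succ] at h
  generalize (4:ℕ)^k = q at h h2 ⊢
  generalize (2:ℕ)^k = p at h
  omega
end

section
/- For all integers h, w ≥ 1: Σ_{i=0}^{h−1} Σ_{j=0}^{w−1} ( |(h−1−i) − i| + |(w−1−j) − j| ) = w·⌊h²/2⌋ + h·⌊w²/2⌋. Consequently, for all h, w ≥ 2 this sum is at least max(h,w)²·min(h,w)/3. -/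
lemma one_dim_sum : ∀ h : ℕ, ∑ i ∈ Finset.range h, (((h : ℤ) - 1 - i) - i).natAbs = h ^ 2 / 2 := by
  intro h
  induction h using Nat.strong_induction_on with
  | _ h ih =>
    match h with
    | 0 => simp
    | 1 => simp
    | (k + 2) =>
      have hk := ih k (by omega)
      rw [Finset.sum_range_succ, Finset.sum_range_succ']
      have h1 : ∀ i : ℕ, ((((k:ℤ) + 2) - 1 - (i+1)) - (i+1)).natAbs
          = (((k:ℤ) - 1 - i) - i).natAbs := by
        intro i
        congr 1
        ring
      have h2 : ∑ i ∈ Finset.range k, ((((k+2:ℕ):ℤ) - 1 - ((i:ℕ)+1:ℕ)) - ((i:ℕ)+1:ℕ)).natAbs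
          = k ^ 2 / 2 := by
        rw [← hk]
        apply Finset.sum_congr rfl
        intro i _
        push_cast
        congr 1
        ring
      rw [h2]
      have h3 : ((((k+2:ℕ):ℤ) - 1 - (0:ℕ)) - (0:ℕ)).natAbs = k + 1 := by
        push_cast; simp; omega
      have h4 : ((((k+2:ℕ):ℤ) - 1 - ((k+1:ℕ):ℕ)) - ((k+1:ℕ):ℕ)).natAbs = k + 1 := by
        push_cast
        have : ((k:ℤ) + 2 - 1 - (k+1)) - (k+1) = -(k+1) := by ring
        rw [this]
        omega
      rw [h3, h4]
      have : (k + 2) ^ 2 = k ^ 2 + (4 * k + 4) := by ring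
      rw [this]
      omega

lemma div_bound (M : ℕ) (hM : 2 ≤ M) : M ^ 2 ≤ 3 * (M ^ 2 / 2) := by
  have h4 : 4 ≤ M ^ 2 := by nlinarith
  omega

/-- Counting core of the permutation energy lower bound: reversing the
row-major order of an `h × w` grid moves the element at cell `(i, j)` to cell
`(h−1−i, w−1−j)`, for a total Manhattan distance of exactly
`w·⌊h²/2⌋ + h·⌊w²/2⌋`, which for `h, w ≥ 2` is at least
`max(h,w)²·min(h,w)/3`. -/
theorem permutation_energy_lower_bound (h w : ℕ) (hh : 1 ≤ h) (hw : 1 ≤ w) :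
    (∑ i ∈ Finset.range h, ∑ j ∈ Finset.range w,
        ((((h : ℤ) - 1 - i) - i).natAbs + (((w : ℤ) - 1 - j) - j).natAbs))
      = w * (h ^ 2 / 2) + h * (w ^ 2 / 2) ∧
    (2 ≤ h → 2 ≤ w →
      max h w ^ 2 * min h w ≤
        3 * ∑ i ∈ Finset.range h, ∑ j ∈ Finset.range w,
          ((((h : ℤ) - 1 - i) - i).natAbs + (((w : ℤ) - 1 - j) - j).natAbs)) := by
  have key : (∑ i ∈ Finset.range h, ∑ j ∈ Finset.range w,
        ((((h : ℤ) - 1 - i) - i).natAbs + (((w : ℤ) - 1 - j) - j).natAbs))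
      = w * (h ^ 2 / 2) + h * (w ^ 2 / 2) := by
    have : ∀ i ∈ Finset.range h, (∑ j ∈ Finset.range w,
        ((((h : ℤ) - 1 - i) - i).natAbs + (((w : ℤ) - 1 - j) - j).natAbs))
        = w * (((h : ℤ) - 1 - i) - i).natAbs + w ^ 2 / 2 := by
      intro i _
      rw [Finset.sum_add_distrib, Finset.sum_const, one_dim_sum w, smul_eq_mul,
        Finset.card_range]
    rw [Finset.sum_congr rfl this, Finset.sum_add_distrib, Finset.sum_const,
      ← Finset.mul_sum, one_dim_sum h, smul_eq_mul, Finset.card_range]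
  refine ⟨key, fun hh2 hw2 => ?_⟩
  rw [key]
  rcases le_total h w with hle | hle
  · rw [max_eq_right hle, min_eq_left hle]
    have := div_bound w hw2
    calc w ^ 2 * h ≤ 3 * (h * (w ^ 2 / 2)) := by nlinarith
    _ ≤ 3 * (w * (h ^ 2 / 2) + h * (w ^ 2 / 2)) :=
        Nat.mul_le_mul_left 3 (Nat.le_add_left _ _)
  · rw [max_eq_left hle, min_eq_right hle]
    have := div_bound h hh2
    calc h ^ 2 * w ≤ 3 * (w * (h ^ 2 / 2)) := by nlinarith
    _ ≤ 3 * (w * (h ^ 2 / 2) + h * (w ^ 2 / 2)) :=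
        Nat.mul_le_mul_left 3 (Nat.le_add_right _ _)
end

section
/- Let α be a linear order, let A : Fin a → α and B : Fin b → α be strictly monotone maps whose ranges are disjoint (so all a + b values are distinct and each array is sorted), and let m ≥ 1. Define the sample S as the multiset { A(i·m − 1) : 1 ≤ i ≤ ⌊a/m⌋ } ∪ { B(j·m − 1) : 1 ≤ j ≤ ⌊b/m⌋ } (positions are 1-indexed, i.e., every m-th element of each array). For 1 ≤ l ≤ |S|, let s be the l-th smallest element of S. Then the number of elements of the combined multiset (range of A together with range of B) that are ≤ s is at least l·m and at most l·m + 2·(m − 1). -/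
private lemma downset_eq_range (S : Finset ℕ) (h : ∀ x ∈ S, ∀ y ≤ x, y ∈ S) :
    S = Finset.range S.card := by
  have hsub : S ⊆ Finset.range S.card := by
    intro x hx
    rw [Finset.mem_range]
    have h1 : Finset.Iic x ⊆ S := fun y hy => h x hx y (Finset.mem_Iic.mp hy)
    have h2 := Finset.card_le_card h1
    simp [Nat.card_Iic] at h2
    omega
  exact Finset.eq_of_subset_of_card_le hsub (by simp)

private lemma key_count {α : Type*} [LinearOrder α] {n : ℕ} {f : Fin n → α}
    (hf : StrictMono f) (s : α) (k : Fin n) :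
    f k ≤ s ↔ k.1 < Multiset.countP (fun x => x ≤ s) (Multiset.map f Finset.univ.val) := by
  classical
  have hc : Multiset.countP (fun x => x ≤ s) (Multiset.map f Finset.univ.val)
      = (Finset.univ.filter fun j => f j ≤ s).card := by
    rw [Multiset.countP_map]
    rfl
  rw [hc]
  set F := Finset.univ.filter fun j : Fin n => f j ≤ s with hF
  set T := F.image Fin.val with hT
  have hcard : T.card = F.card := Finset.card_image_of_injective _ Fin.val_injective
  have hdown : ∀ x ∈ T, ∀ y ≤ x, y ∈ T := by
    intro x hx y hy
    simp only [hT, Finset.mem_image, hF, Finset.mem_filter, Finset.mem_univ, true_and] at hx ⊢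
    obtain ⟨j, hj, rfl⟩ := hx
    refine ⟨⟨y, lt_of_le_of_lt hy j.isLt⟩, le_trans (hf.monotone ?_) hj, rfl⟩
    exact hy
  have hrange := downset_eq_range T hdown
  have hmem : k.1 ∈ T ↔ f k ≤ s := by
    simp only [hT, Finset.mem_image, hF, Finset.mem_filter, Finset.mem_univ, true_and]
    constructor
    · rintro ⟨j, hj, hjk⟩
      have : j = k := Fin.ext hjk
      subst this; exact hj
    · intro h; exact ⟨k, h, rfl⟩
  rw [← hmem, hrange, Finset.mem_range, hcard]

private lemma attach_map_eq {β : Type*} {n : ℕ} (f : (i : ℕ) → i ∈ Finset.Icc 1 n → β)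
    (hinj : ∀ i hi j hj, f i hi = f j hj → i = j) :
    ((Finset.Icc 1 n).attach.val.map fun i => f i.1 i.2) =
      Multiset.map (fun j : Fin n => f (j.1 + 1)
        (Finset.mem_Icc.mpr ⟨Nat.le_add_left 1 j.1, Nat.succ_le_of_lt j.isLt⟩))
        Finset.univ.val := by
  have hfcong : ∀ (i i' : ℕ) (hi : i ∈ Finset.Icc 1 n) (hi' : i' ∈ Finset.Icc 1 n),
      i = i' → f i hi = f i' hi' := by
    rintro i _ hi hi' rfl; rfl
  have h1 : (((Finset.Icc 1 n).attach.val.map fun i => f i.1 i.2)).Nodup := by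
    refine Multiset.Nodup.map ?_ (Finset.Icc 1 n).attach.nodup
    intro x y hxy
    exact Subtype.ext (hinj _ _ _ _ hxy)
  have h2 : (Multiset.map (fun j : Fin n => f (j.1 + 1)
        (Finset.mem_Icc.mpr ⟨Nat.le_add_left 1 j.1, Nat.succ_le_of_lt j.isLt⟩))
        Finset.univ.val).Nodup := by
    refine Multiset.Nodup.map ?_ Finset.univ.nodup
    intro x y hxy
    have := hinj _ _ _ _ hxy
    exact Fin.ext (by omega)
  rw [Multiset.Nodup.ext h1 h2]
  intro x
  simp only [Multiset.mem_map, Finset.mem_val, Finset.mem_attach, true_and, Finset.mem_univ]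
  constructor
  · rintro ⟨⟨i, hi⟩, rfl⟩
    obtain ⟨hi1, hi2⟩ := Finset.mem_Icc.mp hi
    refine ⟨⟨i - 1, by omega⟩, ?_⟩
    exact hfcong _ _ _ _ (show i - 1 + 1 = i by omega)
  · rintro ⟨j, rfl⟩
    exact ⟨⟨j.1 + 1, Finset.mem_Icc.mpr ⟨Nat.le_add_left 1 j.1, Nat.succ_le_of_lt j.isLt⟩⟩, rfl⟩

private lemma side_bound {α : Type*} [LinearOrder α] {n m : ℕ} (hm : 1 ≤ m)
    (A : Fin n → α) (hA : StrictMono A) (s : α)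
    (hidx : ∀ i : Fin (n / m), (i.1 + 1) * m - 1 < n)
    (g : Fin (n / m) → α) (hg : ∀ i : Fin (n / m), g i = A ⟨(i.1 + 1) * m - 1, hidx i⟩) :
    Multiset.countP (fun x => x ≤ s) (Multiset.map g Finset.univ.val) * m ≤
        Multiset.countP (fun x => x ≤ s) (Multiset.map A Finset.univ.val) ∧
      Multiset.countP (fun x => x ≤ s) (Multiset.map A Finset.univ.val) ≤
        Multiset.countP (fun x => x ≤ s) (Multiset.map g Finset.univ.val) * m + (m - 1) := by
  classical
  have hgsm : StrictMono g := by
    intro i j hij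
    rw [hg i, hg j]
    apply hA
    rw [Fin.mk_lt_mk]
    have hij' : i.1 < j.1 := hij
    have h1 : (i.1 + 1) * m < (j.1 + 1) * m :=
      (Nat.mul_lt_mul_right (show 0 < m by omega)).mpr (by omega)
    have h2 : 1 * 1 ≤ (i.1 + 1) * m := Nat.mul_le_mul (by omega) hm
    omega
  set p := Multiset.countP (fun x => x ≤ s) (Multiset.map g Finset.univ.val) with hp
  set c := Multiset.countP (fun x => x ≤ s) (Multiset.map A Finset.univ.val) with hc
  have hp_le : p ≤ n / m := by
    have h := Multiset.countP_le_card (fun x => x ≤ s) (Multiset.map g Finset.univ.val)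
    rwa [Multiset.card_map, ← Finset.card_def, Finset.card_univ, Fintype.card_fin, ← hp] at h
  have hc_le : c ≤ n := by
    have h := Multiset.countP_le_card (fun x => x ≤ s) (Multiset.map A Finset.univ.val)
    rwa [Multiset.card_map, ← Finset.card_def, Finset.card_univ, Fintype.card_fin, ← hc] at h
  constructor
  · rcases Nat.eq_zero_or_pos p with h0 | hpos
    · simp [h0]
    · have hk : g ⟨p - 1, by omega⟩ ≤ s :=
        (key_count hgsm s ⟨p - 1, by omega⟩).mpr (by simp only [Fin.val_mk]; omega)
      rw [hg] at hk
      have h3 := (key_count hA s ⟨(p - 1 + 1) * m - 1, hidx ⟨p - 1, by omega⟩⟩).mp hk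
      have h3' : (p - 1 + 1) * m - 1 < c := by rw [hc]; exact h3
      have hpp : p - 1 + 1 = p := by omega
      rw [hpp] at h3'
      have h4 : 1 * 1 ≤ p * m := Nat.mul_le_mul hpos hm
      omega
  · rcases lt_or_ge p (n / m) with hlt | hge
    · have hk : ¬ g ⟨p, hlt⟩ ≤ s := by
        intro h
        have h2 := (key_count hgsm s ⟨p, hlt⟩).mp h
        simp only [Fin.val_mk, ← hp] at h2
        omega
      rw [hg] at hk
      have h3 : ¬ ((p + 1) * m - 1 < c) := by
        intro h
        exact hk ((key_count hA s ⟨(p + 1) * m - 1, hidx ⟨p, hlt⟩⟩).mpr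
          (by simp only [Fin.val_mk]; omega))
      have h4 : (p + 1) * m = p * m + m := by ring
      omega
    · have hpe : p = n / m := le_antisymm hp_le hge
      have h1 := Nat.div_add_mod n m
      rw [Nat.mul_comm] at h1
      have h2 : n % m < m := Nat.mod_lt _ (by omega)
      rw [hpe]
      omega

/-- Correctness core of deterministic sampling for rank selection in two
sorted arrays: if `S` samples every `m`-th element of the sorted arrays `A`
and `B` (with disjoint ranges), and `s` is the `l`-th smallest element of
`S`, then the number of elements of `A‖B` that are `≤ s` is between `l·m`
and `l·m + 2·(m − 1)`. -/
theorem deterministic_sampling_rank {α : Type*} [LinearOrder α]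
    {a b m : ℕ} (hm : 1 ≤ m)
    (A : Fin a → α) (B : Fin b → α)
    (hA : StrictMono A) (hB : StrictMono B)
    (hdisj : ∀ (i : Fin a) (j : Fin b), A i ≠ B j)
    (S : Multiset α)
    (hS : S =
      ((Finset.Icc 1 (a / m)).attach.val.map fun i => A
        ⟨i.1 * m - 1, by
          obtain ⟨h1, h2⟩ := Finset.mem_Icc.mp i.2
          have h3 : i.1 * m ≤ a / m * m := Nat.mul_le_mul_right m h2
          have h4 : a / m * m ≤ a := Nat.div_mul_le_self a m
          have h5 : 1 * 1 ≤ i.1 * m := Nat.mul_le_mul h1 hm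
          omega⟩) +
      ((Finset.Icc 1 (b / m)).attach.val.map fun j => B
        ⟨j.1 * m - 1, by
          obtain ⟨h1, h2⟩ := Finset.mem_Icc.mp j.2
          have h3 : j.1 * m ≤ b / m * m := Nat.mul_le_mul_right m h2
          have h4 : b / m * m ≤ b := Nat.div_mul_le_self b m
          have h5 : 1 * 1 ≤ j.1 * m := Nat.mul_le_mul h1 hm
          omega⟩))
    (l : ℕ) (hl1 : 1 ≤ l) (hl2 : l ≤ Multiset.card S)
    (s : α) (hs : (S.sort (· ≤ ·))[l - 1]? = some s) :
    l * m ≤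
      Multiset.countP (fun x => x ≤ s)
        (Multiset.map A Finset.univ.val + Multiset.map B Finset.univ.val) ∧
    Multiset.countP (fun x => x ≤ s)
        (Multiset.map A Finset.univ.val + Multiset.map B Finset.univ.val)
      ≤ l * m + 2 * (m - 1) := by
  classical
  have hidxA : ∀ i : Fin (a / m), (i.1 + 1) * m - 1 < a := by
    intro i
    have h3 : (i.1 + 1) * m ≤ a / m * m := Nat.mul_le_mul_right m i.isLt
    have h4 : a / m * m ≤ a := Nat.div_mul_le_self a m
    have h5 : 1 * 1 ≤ (i.1 + 1) * m := Nat.mul_le_mul (by omega) hm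
    omega
  have hidxB : ∀ i : Fin (b / m), (i.1 + 1) * m - 1 < b := by
    intro i
    have h3 : (i.1 + 1) * m ≤ b / m * m := Nat.mul_le_mul_right m i.isLt
    have h4 : b / m * m ≤ b := Nat.div_mul_le_self b m
    have h5 : 1 * 1 ≤ (i.1 + 1) * m := Nat.mul_le_mul (by omega) hm
    omega
  set gA : Fin (a / m) → α := fun i => A ⟨(i.1 + 1) * m - 1, hidxA i⟩ with hgA
  set gB : Fin (b / m) → α := fun i => B ⟨(i.1 + 1) * m - 1, hidxB i⟩ with hgB
  have hmulinj : ∀ i j : ℕ, 1 ≤ i → 1 ≤ j → i * m - 1 = j * m - 1 → i = j := by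
    intro i j hi hj h
    have h1 : 1 * 1 ≤ i * m := Nat.mul_le_mul hi hm
    have h2 : 1 * 1 ≤ j * m := Nat.mul_le_mul hj hm
    have : i * m = j * m := by omega
    exact Nat.eq_of_mul_eq_mul_right (by omega) this
  have hS' : S = Multiset.map gA Finset.univ.val + Multiset.map gB Finset.univ.val := by
    rw [hS]
    congr 1
    · refine (attach_map_eq (f := fun i hi => A
        ⟨i * m - 1, by
          obtain ⟨h1, h2⟩ := Finset.mem_Icc.mp hi
          have h3 : i * m ≤ a / m * m := Nat.mul_le_mul_right m h2
          have h4 : a / m * m ≤ a := Nat.div_mul_le_self a m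
          have h5 : 1 * 1 ≤ i * m := Nat.mul_le_mul h1 hm
          omega⟩) ?_).trans ?_
      · intro i hi j hj h
        obtain ⟨hi1, _⟩ := Finset.mem_Icc.mp hi
        obtain ⟨hj1, _⟩ := Finset.mem_Icc.mp hj
        have := hA.injective h
        exact hmulinj i j hi1 hj1 (congrArg Fin.val this)
      · rfl
    · refine (attach_map_eq (f := fun i hi => B
        ⟨i * m - 1, by
          obtain ⟨h1, h2⟩ := Finset.mem_Icc.mp hi
          have h3 : i * m ≤ b / m * m := Nat.mul_le_mul_right m h2
          have h4 : b / m * m ≤ b := Nat.div_mul_le_self b m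
          have h5 : 1 * 1 ≤ i * m := Nat.mul_le_mul h1 hm
          omega⟩) ?_).trans ?_
      · intro i hi j hj h
        obtain ⟨hi1, _⟩ := Finset.mem_Icc.mp hi
        obtain ⟨hj1, _⟩ := Finset.mem_Icc.mp hj
        have := hB.injective h
        exact hmulinj i j hi1 hj1 (congrArg Fin.val this)
      · rfl
  have hgAsm : StrictMono gA := by
    intro i j hij
    apply hA
    rw [Fin.mk_lt_mk]
    have hij' : i.1 < j.1 := hij
    have h1 : (i.1 + 1) * m < (j.1 + 1) * m :=
      (Nat.mul_lt_mul_right (show 0 < m by omega)).mpr (by omega)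
    have h2 : 1 * 1 ≤ (i.1 + 1) * m := Nat.mul_le_mul (by omega) hm
    omega
  have hgBsm : StrictMono gB := by
    intro i j hij
    apply hB
    rw [Fin.mk_lt_mk]
    have hij' : i.1 < j.1 := hij
    have h1 : (i.1 + 1) * m < (j.1 + 1) * m :=
      (Nat.mul_lt_mul_right (show 0 < m by omega)).mpr (by omega)
    have h2 : 1 * 1 ≤ (i.1 + 1) * m := Nat.mul_le_mul (by omega) hm
    omega
  -- S has no duplicates
  have hSnodup : S.Nodup := by
    rw [hS', Multiset.nodup_add]
    refine ⟨Multiset.Nodup.map hgAsm.injective Finset.univ.nodup,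
      Multiset.Nodup.map hgBsm.injective Finset.univ.nodup, ?_⟩
    rw [Multiset.disjoint_left]
    intro x hx hx'
    obtain ⟨i, _, rfl⟩ := Multiset.mem_map.mp hx
    obtain ⟨j, _, hj⟩ := Multiset.mem_map.mp hx'
    exact hdisj _ _ hj.symm
  -- the sorted list
  set L := S.sort (· ≤ ·) with hL
  have hlcoe : (L : Multiset α) = S := Multiset.sort_eq _ _
  have hLnodup : L.Nodup := by
    rw [← Multiset.coe_nodup, hlcoe]; exact hSnodup
  have hLsorted : L.SortedLT := (Multiset.pairwise_sort S _).sortedLE.sortedLT_of_nodup hLnodup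
  have hgetSM : StrictMono L.get := hLsorted.strictMono_get
  have hLS : Multiset.map L.get Finset.univ.val = S := by
    rw [← hlcoe, Fin.univ_def, Multiset.map_coe, List.map_get_finRange]
  obtain ⟨hlt, hgetval⟩ := List.getElem?_eq_some_iff.mp hs
  have hlen : L.length = Multiset.card S := Multiset.length_sort _
  -- number of elements of S that are ≤ s is exactly l
  have hcS : Multiset.countP (fun x => x ≤ s) S = l := by
    set c := Multiset.countP (fun x => x ≤ s) S with hcdef
    have hkey := fun k => key_count hgetSM s k
    rw [hLS] at hkey
    have hgv : L.get ⟨l - 1, hlt⟩ = s := hgetval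
    have hc1 : l - 1 < c := by
      have h := (hkey ⟨l - 1, hlt⟩).mp (le_of_eq hgv)
      simpa only [Fin.val_mk, ← hcdef] using h
    have hc_le : c ≤ L.length := by
      have h := Multiset.countP_le_card (fun x => x ≤ s) S
      rw [← hcdef] at h
      omega
    by_contra hne
    have hcl : l < c := by omega
    have hlL : l < L.length := by omega
    have h2 : L.get ⟨l, hlL⟩ ≤ s := (hkey ⟨l, hlL⟩).mpr
      (by simp only [Fin.val_mk, ← hcdef]; omega)
    have h3 : L.get ⟨l - 1, hlt⟩ < L.get ⟨l, hlL⟩ := hgetSM (by rw [Fin.mk_lt_mk]; omega)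
    rw [hgv] at h3
    exact absurd h2 (not_le.mpr h3)
  -- p + q = l
  set p := Multiset.countP (fun x => x ≤ s) (Multiset.map gA Finset.univ.val) with hp
  set q := Multiset.countP (fun x => x ≤ s) (Multiset.map gB Finset.univ.val) with hq
  have hpql : p + q = l := by
    rw [hS', Multiset.countP_add] at hcS
    exact hcS
  obtain ⟨hA1, hA2⟩ := side_bound hm A hA s hidxA gA (fun i => rfl)
  obtain ⟨hB1, hB2⟩ := side_bound hm B hB s hidxB gB (fun i => rfl)
  rw [Multiset.countP_add]
  rw [← hp] at hA1 hA2
  rw [← hq] at hB1 hB2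
  have hlm : l * m = p * m + q * m := by rw [← hpql]; ring
  constructor
  · omega
  · omega
end

section
/- Let n ≥ 2 be an integer, c ≥ 3 a real number, and N, k positive integers with c² ≤ N ≤ n, 2k ≤ N, and k ≥ (1/2)·N^{3/4}·√(ln n). Let K be a binomial random variable with k trials and success probability p = c/√N, and let μ = c·k/√N (= E[K]). Then P( |K − μ| ≥ (c/2)·N^{1/4}·√(ln n) ) ≤ 2·n^{−c/6}. -/
open Real Finset ENNReal

lemma exp_quad_bound {s : ℝ} (hs : |s| ≤ 2/3) :
    Real.exp s ≤ 1 + s + (3/4) * s^2 := by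
  have h1 : |s| ≤ 1 := by linarith [abs_nonneg s]
  have h := Real.exp_bound h1 (n := 3) (by norm_num)
  have h2 := (abs_sub_le_iff.1 h).1
  have hr : ∑ m ∈ range 3, s ^ m / m.factorial = 1 + s + s^2/2 := by
    rw [Finset.sum_range_succ, Finset.sum_range_succ, Finset.sum_range_one]
    norm_num [Nat.factorial]
  rw [hr] at h2
  norm_num [Nat.factorial] at h2
  have h3 : |s|^3 = |s| * s^2 := by
    rw [pow_succ, sq_abs]; ring
  have h4 : |s| * s^2 ≤ (2/3) * s^2 := mul_le_mul_of_nonneg_right hs (sq_nonneg s)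
  nlinarith [sq_nonneg s, abs_nonneg s]

lemma binom_tail (p : ℝ) (hp0 : 0 ≤ p) (hp1 : p ≤ 1) (k : ℕ) (l a : ℝ)
    (S : Finset (Fin (k+1))) (hS : ∀ i ∈ S, 0 ≤ l * (((i : ℕ) : ℝ) - a)) :
    ∑ i ∈ S, p^(i:ℕ) * (1-p)^(k - (i:ℕ)) * (k.choose i : ℝ) ≤
      Real.exp ((k:ℝ) * p * (Real.exp l - 1) - l * a) := by
  have hq0 : (0:ℝ) ≤ 1 - p := by linarith
  have hterm : ∀ i : Fin (k+1), (0:ℝ) ≤ p^(i:ℕ) * (1-p)^(k-(i:ℕ)) * (k.choose i : ℝ) := by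
    intro i; positivity
  calc ∑ i ∈ S, p^(i:ℕ) * (1-p)^(k - (i:ℕ)) * (k.choose i : ℝ)
      ≤ ∑ i ∈ S, Real.exp (l * (((i:ℕ):ℝ) - a)) * (p^(i:ℕ) * (1-p)^(k - (i:ℕ)) * (k.choose i : ℝ)) := by
        refine Finset.sum_le_sum fun i hi => ?_
        have := Real.one_le_exp (hS i hi)
        nlinarith [hterm i, this]
    _ ≤ ∑ i : Fin (k+1), Real.exp (l * (((i:ℕ):ℝ) - a)) * (p^(i:ℕ) * (1-p)^(k - (i:ℕ)) * (k.choose i : ℝ)) := by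
        refine Finset.sum_le_sum_of_subset_of_nonneg (Finset.subset_univ S) fun i _ _ => ?_
        have := hterm i
        positivity
    _ = Real.exp (-(l * a)) * ∑ i : Fin (k+1),
          (p * Real.exp l)^(i:ℕ) * (1-p)^(k - (i:ℕ)) * (k.choose i : ℝ) := by
        rw [Finset.mul_sum]
        refine Finset.sum_congr rfl fun i _ => ?_
        have he : Real.exp (l * (((i:ℕ):ℝ) - a)) = Real.exp (((i:ℕ):ℝ) * l) * Real.exp (-(l*a)) := by
          rw [← Real.exp_add]; ring_nf
        rw [he, mul_pow, ← Real.exp_nat_mul]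
        ring
    _ = Real.exp (-(l * a)) * (p * Real.exp l + (1-p))^k := by
        congr 1
        rw [Fin.sum_univ_eq_sum_range (fun i => (p * Real.exp l)^i * (1-p)^(k - i) * (k.choose i : ℝ)), add_pow]
    _ ≤ Real.exp (-(l * a)) * Real.exp ((k:ℝ) * (p * (Real.exp l - 1))) := by
        refine mul_le_mul_of_nonneg_left ?_ (Real.exp_nonneg _)
        have hb0 : (0:ℝ) ≤ p * Real.exp l + (1-p) := by positivity
        have hble : p * Real.exp l + (1-p) ≤ Real.exp (p * (Real.exp l - 1)) := by
          have := Real.add_one_le_exp (p * (Real.exp l - 1))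
          linarith
        calc (p * Real.exp l + (1-p))^k ≤ (Real.exp (p * (Real.exp l - 1)))^k :=
              pow_le_pow_left₀ hb0 hble k
          _ = Real.exp ((k:ℝ) * (p * (Real.exp l - 1))) := (Real.exp_nat_mul _ k).symm
    _ = Real.exp ((k:ℝ) * p * (Real.exp l - 1) - l * a) := by
        rw [← Real.exp_add]; ring_nf

lemma chern_arith (m t : ℝ) (hm : 0 < m) :
    m * ((3:ℝ)/4 * (2*t/(3*m))^2) - (2*t/(3*m))*t = -(t^2/(3*m)) := by
  field_simp
  ring

set_option maxHeartbeats 1600000 in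
/-- Concentration of the number `K` of sampled low-rank elements in the
rank-selection algorithm: for `K ~ Binomial(k, c/√N)` with mean
`μ = c·k/√N`, the probability that `K` deviates from `μ` by at least
`(c/2)·N^{1/4}·√(ln n)` is at most `2·n^{−c/6}`. -/
theorem rank_selection_pivot_concentration
    (n : ℕ) (hn : 2 ≤ n) (c : ℝ) (hc : 3 ≤ c) (N k : ℕ)
    (hN : 0 < N) (hk : 0 < k)
    (hcN : c ^ 2 ≤ (N : ℝ)) (hNn : N ≤ n) (h2k : 2 * k ≤ N)
    (hklb : (1 / 2 : ℝ) * (N : ℝ) ^ ((3 : ℝ) / 4) * Real.sqrt (Real.log n)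
      ≤ (k : ℝ)) :
    (PMF.binomial (Real.toNNReal (c / Real.sqrt N))
        (by
          rw [Real.toNNReal_le_one]
          have hc0 : (0 : ℝ) ≤ c := by linarith
          have h1 : c ≤ Real.sqrt N := by
            have := Real.sqrt_le_sqrt hcN
            rwa [Real.sqrt_sq hc0] at this
          have h2 : (0 : ℝ) < Real.sqrt N := lt_of_lt_of_le (by linarith) h1
          exact div_le_one_of_le₀ h1 h2.le) k).toMeasure
      {x : Fin (k + 1) |
        (c / 2) * (N : ℝ) ^ ((1 : ℝ) / 4) * Real.sqrt (Real.log n) ≤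
          |((x : ℕ) : ℝ) - c * k / Real.sqrt N|}
      ≤ ENNReal.ofReal (2 * (n : ℝ) ^ (-(c / 6))) := by
  classical
  have hn2 : (2:ℝ) ≤ (n:ℝ) := by exact_mod_cast hn
  have hn1 : (1:ℝ) < (n:ℝ) := by linarith
  have hn0 : (0:ℝ) < (n:ℝ) := by linarith
  set L := Real.log n with hLdef
  have hL : 0 < L := Real.log_pos hn1
  have hc0 : (0:ℝ) < c := by linarith
  have hN0 : (0:ℝ) < (N:ℝ) := by exact_mod_cast hN
  have hsN : 0 < Real.sqrt N := Real.sqrt_pos.2 hN0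
  set p := c / Real.sqrt N with hpdef
  have hp0 : 0 ≤ p := by rw [hpdef]; positivity
  have hcs : c ≤ Real.sqrt N := by
    have := Real.sqrt_le_sqrt hcN; rwa [Real.sqrt_sq hc0.le] at this
  have hp1 : p ≤ 1 := by rw [hpdef]; exact div_le_one_of_le₀ hcs hsN.le
  have hq0 : (0:ℝ) ≤ 1 - p := by linarith
  set t : ℝ := c / 2 * (N : ℝ) ^ ((1 : ℝ) / 4) * Real.sqrt L with htdef
  set μr : ℝ := (k:ℝ) * p with hμdef
  clear_value L
  have hμr : c * (k:ℝ) / Real.sqrt N = μr := by rw [hμdef, hpdef]; ring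
  have hN14pos : (0:ℝ) < (N:ℝ) ^ ((1:ℝ)/4) := Real.rpow_pos_of_pos hN0 _
  have hsLpos : 0 < Real.sqrt L := Real.sqrt_pos.2 hL
  have htpos : 0 < t := by rw [htdef]; positivity
  have hkpos : (0:ℝ) < (k:ℝ) := by exact_mod_cast hk
  have hμpos : 0 < μr := by
    rw [hμdef]; apply mul_pos hkpos; rw [hpdef]; positivity
  have hN14 : ((N:ℝ) ^ ((1:ℝ)/4))^2 = Real.sqrt N := by
    rw [← Real.rpow_natCast ((N:ℝ)^((1:ℝ)/4)) 2, ← Real.rpow_mul hN0.le,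
      Real.sqrt_eq_rpow]
    norm_num
  have hN34 : (N:ℝ) ^ ((3:ℝ)/4) = Real.sqrt N * (N:ℝ) ^ ((1:ℝ)/4) := by
    rw [Real.sqrt_eq_rpow, ← Real.rpow_add hN0]
    norm_num
  have hsL2 : Real.sqrt L ^ 2 = L := Real.sq_sqrt hL.le
  have ht2 : t^2 = c^2/4 * Real.sqrt N * L := by
    have h' : t^2 = (c/2)^2 * ((N:ℝ)^((1:ℝ)/4))^2 * (Real.sqrt L)^2 := by rw [htdef]; ring
    rw [h', hN14, hsL2]; ring
  clear_value t
  have ht_le : t ≤ μr := by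
    have h1 : t * Real.sqrt N = c/2 * (N:ℝ)^((3:ℝ)/4) * Real.sqrt L := by
      rw [htdef, hN34]; ring
    have h2 : μr * Real.sqrt N = (k:ℝ) * c := by
      rw [hμdef, hpdef, mul_assoc, div_mul_cancel₀ c hsN.ne']
    have h3 : c/2 * (N:ℝ)^((3:ℝ)/4) * Real.sqrt L ≤ (k:ℝ) * c := by
      have := mul_le_mul_of_nonneg_left hklb hc0.le
      nlinarith
    have h4 : t * Real.sqrt N ≤ μr * Real.sqrt N := by rw [h1, h2]; exact h3
    exact le_of_mul_le_mul_right h4 hsN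
  have hμ_ub : μr ≤ c/2 * Real.sqrt N := by
    have h2k' : (k:ℝ) ≤ (N:ℝ)/2 := by
      have : ((2*k : ℕ):ℝ) ≤ ((N:ℕ):ℝ) := by exact_mod_cast h2k
      push_cast at this; linarith
    have h2 : μr * Real.sqrt N = (k:ℝ) * c := by
      rw [hμdef, hpdef, mul_assoc, div_mul_cancel₀ c hsN.ne']
    have hss : Real.sqrt N * Real.sqrt N = (N:ℝ) := Real.mul_self_sqrt hN0.le
    have h4 : μr * Real.sqrt N ≤ (c/2 * Real.sqrt N) * Real.sqrt N := by
      rw [h2]; nlinarith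
    exact le_of_mul_le_mul_right h4 hsN
  clear_value μr p
  set l : ℝ := 2*t/(3*μr) with hldef
  clear_value l
  have hl0 : 0 < l := by rw [hldef]; positivity
  have hl23 : l ≤ 2/3 := by
    rw [hldef, div_le_iff₀ (by positivity)]
    linarith
  -- core exponent bound
  have hcore : μr * ((3:ℝ)/4 * l^2) - l*t ≤ -(c/6*L) := by
    rw [hldef, chern_arith μr t hμpos]
    have key : c/6*L ≤ t^2/(3*μr) := by
      rw [le_div_iff₀ (by positivity), ht2]
      nlinarith [hμ_ub, hL.le, hc0.le, hsN.le]
    linarith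
  have hql := exp_quad_bound (s := l) (by rw [abs_of_pos hl0]; exact hl23)
  have hqnl := exp_quad_bound (s := -l) (by rw [abs_neg, abs_of_pos hl0]; exact hl23)
  -- tail sets
  set Fp : Finset (Fin (k+1)) := Finset.univ.filter (fun x => μr + t ≤ ((x:ℕ):ℝ)) with hFp
  set Fm : Finset (Fin (k+1)) := Finset.univ.filter (fun x => ((x:ℕ):ℝ) ≤ μr - t) with hFm
  have hupper : ∑ i ∈ Fp, p^(i:ℕ) * (1-p)^(k - (i:ℕ)) * (k.choose i : ℝ) ≤ Real.exp (-(c/6*L)) := by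
    have h1 := binom_tail p hp0 hp1 k l (μr + t) Fp (by
      intro i hi
      rw [hFp, Finset.mem_filter] at hi
      have h5 := hi.2
      have h6 : (0:ℝ) ≤ ((i:ℕ):ℝ) - (μr + t) := by linarith
      exact mul_nonneg hl0.le h6)
    refine h1.trans (Real.exp_le_exp.2 ?_)
    have heq : (k:ℝ) * p * (Real.exp l - 1) - l*(μr + t)
        = μr * (Real.exp l - 1 - l) - l*t := by rw [hμdef]; ring
    rw [heq]
    have h2 : Real.exp l - 1 - l ≤ (3:ℝ)/4 * l^2 := by linarith
    have h3 : μr * (Real.exp l - 1 - l) ≤ μr * ((3:ℝ)/4 * l^2) :=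
      mul_le_mul_of_nonneg_left h2 hμpos.le
    linarith
  have hlower : ∑ i ∈ Fm, p^(i:ℕ) * (1-p)^(k - (i:ℕ)) * (k.choose i : ℝ) ≤ Real.exp (-(c/6*L)) := by
    have h1 := binom_tail p hp0 hp1 k (-l) (μr - t) Fm (by
      intro i hi
      rw [hFm, Finset.mem_filter] at hi
      have h2 := hi.2
      have h3 : ((i:ℕ):ℝ) - (μr - t) ≤ 0 := by linarith
      nlinarith [mul_nonneg hl0.le (neg_nonneg.2 h3)])
    refine h1.trans (Real.exp_le_exp.2 ?_)
    have heq : (k:ℝ) * p * (Real.exp (-l) - 1) - (-l)*(μr - t)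
        = μr * (Real.exp (-l) - 1 - (-l)) - l*t := by rw [hμdef]; ring
    rw [heq]
    have h2 : Real.exp (-l) - 1 - (-l) ≤ (3:ℝ)/4 * l^2 := by nlinarith
    have h3 : μr * (Real.exp (-l) - 1 - (-l)) ≤ μr * ((3:ℝ)/4 * l^2) :=
      mul_le_mul_of_nonneg_left h2 hμpos.le
    linarith
  -- the real-valued total bound
  set F : Finset (Fin (k+1)) :=
    Finset.univ.filter (fun x => t ≤ |((x:ℕ):ℝ) - c * k / Real.sqrt N|) with hFdef
  have hreal : ∑ x ∈ F, p^(x:ℕ) * (1-p)^(k - (x:ℕ)) * (k.choose x : ℝ)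
      ≤ 2 * (n : ℝ) ^ (-(c / 6)) := by
    have hFsub : F ⊆ Fp ∪ Fm := by
      intro x hx
      rw [hFdef, Finset.mem_filter, hμr] at hx
      rcases le_abs.1 hx.2 with h | h
      · exact Finset.mem_union_left _ (by rw [hFp, Finset.mem_filter]; exact ⟨Finset.mem_univ _, by linarith⟩)
      · exact Finset.mem_union_right _ (by rw [hFm, Finset.mem_filter]; exact ⟨Finset.mem_univ _, by linarith⟩)
    have hterm : ∀ i : Fin (k+1), (0:ℝ) ≤ p^(i:ℕ) * (1-p)^(k-(i:ℕ)) * (k.choose i : ℝ) := by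
      intro i; positivity
    calc ∑ x ∈ F, p^(x:ℕ) * (1-p)^(k - (x:ℕ)) * (k.choose x : ℝ)
        ≤ ∑ x ∈ Fp ∪ Fm, p^(x:ℕ) * (1-p)^(k - (x:ℕ)) * (k.choose x : ℝ) :=
          Finset.sum_le_sum_of_subset_of_nonneg hFsub (fun i _ _ => hterm i)
      _ ≤ ∑ x ∈ Fp, p^(x:ℕ) * (1-p)^(k - (x:ℕ)) * (k.choose x : ℝ)
          + ∑ x ∈ Fm, p^(x:ℕ) * (1-p)^(k - (x:ℕ)) * (k.choose x : ℝ) := by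
          rw [← Finset.union_sdiff_self_eq_union, Finset.sum_union Finset.disjoint_sdiff]
          refine add_le_add le_rfl (Finset.sum_le_sum_of_subset_of_nonneg
            (Finset.sdiff_subset) (fun i _ _ => hterm i))
      _ ≤ Real.exp (-(c/6*L)) + Real.exp (-(c/6*L)) := add_le_add hupper hlower
      _ = 2 * (n : ℝ) ^ (-(c / 6)) := by
          rw [Real.rpow_def_of_pos hn0, ← hLdef,
            show L * -(c/6) = -(c/6*L) by ring]
          ring
  -- from reals to the measure
  rw [PMF.toMeasure_apply_fintype]
  have h1p : (1 : ℝ≥0∞) - ENNReal.ofReal p = ENNReal.ofReal (1-p) := by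
    rw [← ENNReal.ofReal_one, ← ENNReal.ofReal_sub _ hp0]
  have hpmf : ∀ (h' : Real.toNNReal (c / Real.sqrt N) ≤ 1) (i : Fin (k+1)),
      PMF.binomial (Real.toNNReal (c / Real.sqrt N)) h' k i
        = ENNReal.ofReal (p^(i:ℕ) * (1-p)^(k - (i:ℕ)) * (k.choose i : ℝ)) := by
    intro h' i
    rw [PMF.binomial_apply, Fin.val_last, ← hpdef]
    show ENNReal.ofReal p ^ (i:ℕ) * (1 - ENNReal.ofReal p) ^ (k - (i:ℕ)) * (k.choose i : ℝ≥0∞) = _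
    rw [h1p, ← ENNReal.ofReal_pow hp0, ← ENNReal.ofReal_pow hq0,
      ← ENNReal.ofReal_natCast, ← ENNReal.ofReal_mul (by positivity),
      ← ENNReal.ofReal_mul (by positivity)]
  have hindic : ∀ (h' : Real.toNNReal (c / Real.sqrt N) ≤ 1) (x : Fin (k+1)),
      Set.indicator {x : Fin (k + 1) | t ≤ |((x : ℕ) : ℝ) - c * k / Real.sqrt N|}
        (⇑(PMF.binomial (Real.toNNReal (c / Real.sqrt N)) h' k)) x
      = if t ≤ |((x:ℕ):ℝ) - c * k / Real.sqrt N|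
          then ENNReal.ofReal (p^(x:ℕ) * (1-p)^(k - (x:ℕ)) * (k.choose x : ℝ)) else 0 := by
    intro h' x
    rw [Set.indicator_apply]
    by_cases hx : t ≤ |((x:ℕ):ℝ) - c * k / Real.sqrt N|
    · rw [if_pos hx, if_pos (by exact hx), hpmf]
    · rw [if_neg hx, if_neg (by exact hx)]
  refine le_trans (le_of_eq (Finset.sum_congr rfl fun x _ => hindic _ x)) ?_
  rw [← Finset.sum_filter, ← ENNReal.ofReal_sum_of_nonneg (fun i _ => by positivity)]
  exact ENNReal.ofReal_le_ofReal hreal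
end

section
/- Let n ≥ 2 be an integer, c ≥ 3 a real number, and N, k positive integers with c² ≤ N ≤ n and 1 ≤ k < (1/2)·N^{3/4}·√(ln n). Let K be a binomial random variable with k trials and success probability p = c/√N. Then P( K ≥ c·k/√N + (c/2)·N^{1/4}·√(ln n) ) ≤ exp( −(c/6)·N^{1/4}·√(ln n) ). -/
open scoped ENNReal

/-- Small-`k` case of the pivot-correctness lemma of the rank-selection
algorithm: for `K ~ Binomial(k, c/√N)` with mean `c·k/√N` and
`k < (1/2)·N^{3/4}·√(ln n)`, the upper tail beyond
`c·k/√N + (c/2)·N^{1/4}·√(ln n)` has probability at most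
`exp(−(c/6)·N^{1/4}·√(ln n))`. -/
theorem rank_selection_pivot_upper_tail
    (n : ℕ) (hn : 2 ≤ n) (c : ℝ) (hc : 3 ≤ c) (N k : ℕ)
    (hN : 0 < N) (hk : 1 ≤ k)
    (hcN : c ^ 2 ≤ (N : ℝ)) (hNn : N ≤ n)
    (hkub : (k : ℝ) <
      (1 / 2 : ℝ) * (N : ℝ) ^ ((3 : ℝ) / 4) * Real.sqrt (Real.log n)) :
    (PMF.binomial (Real.toNNReal (c / Real.sqrt N))
        (by
          rw [Real.toNNReal_le_one]
          have hc0 : (0 : ℝ) ≤ c := by linarith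
          have h1 : c ≤ Real.sqrt N := by
            have := Real.sqrt_le_sqrt hcN
            rwa [Real.sqrt_sq hc0] at this
          have h2 : (0 : ℝ) < Real.sqrt N := lt_of_lt_of_le (by linarith) h1
          exact div_le_one_of_le₀ h1 h2.le) k).toMeasure
      {x : Fin (k + 1) |
        c * k / Real.sqrt N +
            (c / 2) * (N : ℝ) ^ ((1 : ℝ) / 4) * Real.sqrt (Real.log n) ≤
          ((x : ℕ) : ℝ)}
      ≤ ENNReal.ofReal
          (Real.exp (-(c / 6) * (N : ℝ) ^ ((1 : ℝ) / 4) *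
            Real.sqrt (Real.log n))) := by
  have hc0 : (0 : ℝ) < c := by linarith
  have hsN : (0 : ℝ) < Real.sqrt N := Real.sqrt_pos.mpr (by exact_mod_cast hN)
  set p' : ℝ := c / Real.sqrt N with hp'def
  have hp'0 : 0 ≤ p' := le_of_lt (div_pos hc0 hsN)
  have hp'1 : p' ≤ 1 := by
    have h1 : c ≤ Real.sqrt N := by
      have := Real.sqrt_le_sqrt hcN
      rwa [Real.sqrt_sq hc0.le] at this
    exact div_le_one_of_le₀ h1 hsN.le
  set q : NNReal := Real.toNNReal p' with hqdef
  have hq1 : q ≤ 1 := by rw [hqdef, Real.toNNReal_le_one]; exact hp'1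
  set p : ℝ≥0∞ := ENNReal.ofReal p' with hpdef
  have hp1 : p ≤ 1 := by rw [hpdef, ENNReal.ofReal_le_one]; exact hp'1
  set t : ℝ := (c / 2) * (N : ℝ) ^ ((1 : ℝ) / 4) * Real.sqrt (Real.log n) with htdef
  set μ : ℝ := c * k / Real.sqrt N with hμdef
  set a : ℝ := μ + t with hadef
  -- basic facts
  have hlogn : 0 < Real.log n := Real.log_pos (by exact_mod_cast hn)
  have hNr : (0 : ℝ) < N := by exact_mod_cast hN
  have ht0 : 0 ≤ t := by
    have := Real.rpow_nonneg hNr.le ((1:ℝ)/4)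
    have := Real.sqrt_nonneg (Real.log n)
    positivity
  have hμ0 : 0 ≤ μ := by positivity
  have hμt : μ ≤ t := by
    have hsqrt : Real.sqrt N = (N : ℝ) ^ ((1:ℝ)/2) := Real.sqrt_eq_rpow (N:ℝ)
    have hmul : (k : ℝ) * (c / Real.sqrt N) ≤
        ((1 / 2 : ℝ) * (N : ℝ) ^ ((3 : ℝ) / 4) * Real.sqrt (Real.log n)) * (c / Real.sqrt N) := by
      apply mul_le_mul_of_nonneg_right hkub.le (le_of_lt (div_pos hc0 hsN))
    have hpow : (N : ℝ) ^ ((3 : ℝ) / 4) / Real.sqrt N = (N : ℝ) ^ ((1:ℝ)/4) := by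
      rw [hsqrt, ← Real.rpow_sub hNr]
      norm_num
    calc μ = (k : ℝ) * (c / Real.sqrt N) := by rw [hμdef]; ring
      _ ≤ ((1 / 2 : ℝ) * (N : ℝ) ^ ((3 : ℝ) / 4) * Real.sqrt (Real.log n)) * (c / Real.sqrt N) := hmul
      _ = (c/2) * ((N : ℝ) ^ ((3 : ℝ) / 4) / Real.sqrt N) * Real.sqrt (Real.log n) := by ring
      _ = t := by rw [hpow, htdef]
  have ha0 : 0 ≤ a := add_nonneg hμ0 ht0
  -- the set and measure
  set S : Set (Fin (k+1)) := {x : Fin (k + 1) | a ≤ ((x : ℕ) : ℝ)} with hSdef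
  have hmeas : (PMF.binomial q hq1 k).toMeasure S = ∑ x, S.indicator (PMF.binomial q hq1 k) x :=
    PMF.toMeasure_apply_fintype _ _
  refine le_trans (le_of_eq hmeas) ?_
  -- pointwise bound
  have hpt : ∀ x : Fin (k+1), S.indicator (PMF.binomial q hq1 k) x ≤
      (PMF.binomial q hq1 k) x * (2:ℝ≥0∞) ^ (((x:ℕ):ℝ)) * (2:ℝ≥0∞) ^ (-a) := by
    intro x
    by_cases hx : x ∈ S
    · rw [Set.indicator_of_mem hx]
      have hx' : a ≤ ((x:ℕ):ℝ) := hx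
      have h2 : (1:ℝ≥0∞) ≤ (2:ℝ≥0∞) ^ (((x:ℕ):ℝ) - a) := by
        calc (1:ℝ≥0∞) = (2:ℝ≥0∞) ^ (0:ℝ) := ENNReal.rpow_zero.symm
          _ ≤ (2:ℝ≥0∞) ^ (((x:ℕ):ℝ) - a) :=
            ENNReal.rpow_le_rpow_of_exponent_le (by norm_num) (sub_nonneg.mpr hx')
      calc (PMF.binomial q hq1 k) x = (PMF.binomial q hq1 k) x * 1 := (mul_one _).symm
        _ ≤ (PMF.binomial q hq1 k) x * (2:ℝ≥0∞) ^ (((x:ℕ):ℝ) - a) :=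
            mul_le_mul_right h2 _
        _ = (PMF.binomial q hq1 k) x * (2:ℝ≥0∞) ^ (((x:ℕ):ℝ)) * (2:ℝ≥0∞) ^ (-a) := by
            rw [mul_assoc, ← ENNReal.rpow_add _ _ (by norm_num) (by norm_num)]
            ring_nf
    · rw [Set.indicator_of_notMem hx]; exact zero_le'
  calc (∑ x, S.indicator (PMF.binomial q hq1 k) x)
      ≤ ∑ x : Fin (k+1), (PMF.binomial q hq1 k) x * (2:ℝ≥0∞) ^ (((x:ℕ):ℝ)) * (2:ℝ≥0∞) ^ (-a) :=
        Finset.sum_le_sum fun x _ => hpt x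
    _ = (∑ x : Fin (k+1), (PMF.binomial q hq1 k) x * (2:ℝ≥0∞) ^ (((x:ℕ):ℝ))) * (2:ℝ≥0∞) ^ (-a) := by
        rw [Finset.sum_mul]
    _ = (1 + p)^k * (2:ℝ≥0∞) ^ (-a) := by
        congr 1
        have : ∀ x : Fin (k+1), (PMF.binomial q hq1 k) x * (2:ℝ≥0∞) ^ (((x:ℕ):ℝ))
            = (2*p) ^ (x:ℕ) * (1-p) ^ (k - (x:ℕ)) * (k.choose (x:ℕ)) := by
          intro x
          rw [PMF.binomial_apply, ENNReal.rpow_natCast, mul_pow, show ((q : ℝ≥0∞)) = p from rfl]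
          simp only [Fin.val_last]
          ring
        rw [Finset.sum_congr rfl fun x _ => this x]
        rw [Fin.sum_univ_eq_sum_range (fun i => (2*p) ^ i * (1-p) ^ (k - i) * (k.choose i))]
        rw [← add_pow (2*p) (1-p) k]
        congr 1
        have h1 : p + (1 - p) = 1 := by
          rw [add_comm]; exact tsub_add_cancel_of_le hp1
        calc 2*p + (1-p) = p + (p + (1-p)) := by ring
          _ = 1 + p := by rw [h1, add_comm]
    _ ≤ ENNReal.ofReal (Real.exp (-(c / 6) * (N : ℝ) ^ ((1 : ℝ) / 4) * Real.sqrt (Real.log n))) := by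
        have h1p : (1 + p)^k = ENNReal.ofReal ((1 + p')^k) := by
          rw [hpdef, ENNReal.ofReal_pow (by linarith : (0:ℝ) ≤ 1 + p'),
            ENNReal.ofReal_add (by norm_num) hp'0, ENNReal.ofReal_one]
        have h2a : (2:ℝ≥0∞) ^ (-a) = ENNReal.ofReal ((2:ℝ) ^ (-a)) := by
          rw [← ENNReal.ofReal_rpow_of_pos (by norm_num : (0:ℝ) < 2)]
          norm_num
        rw [h1p, h2a, ← ENNReal.ofReal_mul (by positivity)]
        apply ENNReal.ofReal_le_ofReal
        -- real inequality
        have hexp : (1 + p')^k ≤ Real.exp (k * p') := by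
          calc (1 + p')^k ≤ (Real.exp p')^k := by
                apply pow_le_pow_left₀ (by linarith)
                rw [add_comm]; exact Real.add_one_le_exp p'
            _ = Real.exp (k * p') := by rw [← Real.exp_nat_mul]
        have h2ar : (2:ℝ) ^ (-a) = Real.exp (-a * Real.log 2) := by
          rw [Real.rpow_def_of_pos (by norm_num), mul_comm]
        have hkp' : (k:ℝ) * p' = μ := by rw [hμdef, hp'def]; ring
        calc (1 + p')^k * (2:ℝ) ^ (-a) ≤ Real.exp ((k:ℝ) * p') * Real.exp (-a * Real.log 2) := by
              rw [h2ar]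
              exact mul_le_mul_of_nonneg_right hexp (Real.exp_nonneg _)
          _ = Real.exp ((k:ℝ) * p' + -a * Real.log 2) := (Real.exp_add _ _).symm
          _ ≤ Real.exp (-(c / 6) * (N : ℝ) ^ ((1 : ℝ) / 4) * Real.sqrt (Real.log n)) := by
              apply Real.exp_le_exp.mpr
              have hrhs : -(c / 6) * (N : ℝ) ^ ((1 : ℝ) / 4) * Real.sqrt (Real.log n) = -(t/3) := by
                rw [htdef]; ring
              rw [hrhs, hkp', hadef]
              have hl2 : (2:ℝ)/3 ≤ Real.log 2 := by
                have := Real.log_two_gt_d9; linarith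
              have hl2' : Real.log 2 ≤ 1 := by
                have := Real.log_two_lt_d9; linarith
              nlinarith [mul_nonneg (sub_nonneg.mpr hμt) (sub_nonneg.mpr hl2'),
                mul_nonneg ht0 (sub_nonneg.mpr hl2)]
end

section
/- Let n ≥ 2 be an integer, c ≥ 3 and 0 < ε ≤ 1 real numbers, and N, m positive integers with c² ≤ N ≤ n and m ≥ (1+ε)·N^{3/4}·√(ln n). Let X be a binomial random variable with m trials and success probability p = c/√N. Then P( X ≤ c·N^{1/4}·√(ln n) ) ≤ exp( −(c·ε²/4)·N^{1/4}·√(ln n) ). -/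
/-- Chernoff-style bound on a truncated binomial sum. -/
theorem binomial_lower_tail_sum (m : ℕ) (p t a : ℝ) (hp0 : 0 ≤ p) (hp1 : p ≤ 1)
    (ht : t ≤ 0) :
    ∑ x ∈ Finset.range (m + 1),
        (if (x : ℝ) ≤ a then p ^ x * (1 - p) ^ (m - x) * (m.choose x : ℝ) else 0)
      ≤ Real.exp (-(t * a) + m * p * (Real.exp t - 1)) := by
  have hq0 : 0 ≤ 1 - p := by linarith
  have hstep : ∀ x ∈ Finset.range (m + 1),
      (if (x : ℝ) ≤ a then p ^ x * (1 - p) ^ (m - x) * (m.choose x : ℝ) else 0)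
        ≤ Real.exp (t * x - t * a) * (p ^ x * (1 - p) ^ (m - x) * (m.choose x : ℝ)) := by
    intro x _
    have hterm : 0 ≤ p ^ x * (1 - p) ^ (m - x) * (m.choose x : ℝ) := by positivity
    by_cases hx : (x : ℝ) ≤ a
    · rw [if_pos hx]
      nth_rewrite 1 [← one_mul (p ^ x * (1 - p) ^ (m - x) * (m.choose x : ℝ))]
      apply mul_le_mul_of_nonneg_right _ hterm
      rw [← Real.exp_zero]
      apply Real.exp_le_exp.2
      nlinarith
    · rw [if_neg hx]
      positivity
  calc ∑ x ∈ Finset.range (m + 1),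
        (if (x : ℝ) ≤ a then p ^ x * (1 - p) ^ (m - x) * (m.choose x : ℝ) else 0)
      ≤ ∑ x ∈ Finset.range (m + 1),
        Real.exp (t * x - t * a) * (p ^ x * (1 - p) ^ (m - x) * (m.choose x : ℝ)) :=
        Finset.sum_le_sum hstep
    _ = Real.exp (-(t * a)) * ∑ x ∈ Finset.range (m + 1),
        (p * Real.exp t) ^ x * (1 - p) ^ (m - x) * (m.choose x : ℝ) := by
        rw [Finset.mul_sum]
        apply Finset.sum_congr rfl
        intro x _
        rw [mul_pow, ← Real.exp_nat_mul,
          show t * (x : ℝ) - t * a = -(t * a) + (x : ℝ) * t by ring, Real.exp_add]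
        ring
    _ = Real.exp (-(t * a)) * (p * Real.exp t + (1 - p)) ^ m := by
        rw [add_pow]
    _ ≤ Real.exp (-(t * a)) * Real.exp (m * p * (Real.exp t - 1)) := by
        apply mul_le_mul_of_nonneg_left _ (Real.exp_nonneg _)
        have hbase : p * Real.exp t + (1 - p) = 1 + p * (Real.exp t - 1) := by ring
        rw [hbase]
        calc (1 + p * (Real.exp t - 1)) ^ m ≤ Real.exp (p * (Real.exp t - 1)) ^ m := by
              apply pow_le_pow_left₀
              · nlinarith [Real.exp_nonneg t]
              · have := Real.add_one_le_exp (p * (Real.exp t - 1))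
                linarith
          _ = Real.exp (m * p * (Real.exp t - 1)) := by
              rw [← Real.exp_nat_mul]; ring_nf
    _ = Real.exp (-(t * a) + m * p * (Real.exp t - 1)) := (Real.exp_add _ _).symm

open scoped ENNReal in
/-- Chernoff lower-tail bound for the binomial PMF. -/
theorem binomial_lower_tail (m : ℕ) (p A t : ℝ) (hp0 : 0 ≤ p) (hp1 : p ≤ 1)
    (ht : t ≤ 0) (h : Real.toNNReal p ≤ 1) :
    (PMF.binomial (Real.toNNReal p) h m).toMeasure
        {x : Fin (m + 1) | ((x : ℕ) : ℝ) ≤ A}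
      ≤ ENNReal.ofReal (Real.exp (-(t * A) + (m : ℝ) * p * (Real.exp t - 1))) := by
  have hq0 : (0:ℝ) ≤ 1 - p := by linarith
  have hS : MeasurableSet {x : Fin (m + 1) | ((x : ℕ) : ℝ) ≤ A} :=
    MeasurableSpace.measurableSet_top
  rw [PMF.toMeasure_apply _ hS, tsum_fintype]
  have hsum : ∑ x : Fin (m + 1),
      ({x : Fin (m + 1) | ((x : ℕ) : ℝ) ≤ A}).indicator
        (⇑(PMF.binomial (Real.toNNReal p) h m)) x
      = ENNReal.ofReal (∑ x ∈ Finset.range (m + 1),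
          (if (x : ℝ) ≤ A then p ^ x * (1 - p) ^ (m - x) * (m.choose x : ℝ) else 0)) := by
    rw [ENNReal.ofReal_sum_of_nonneg (by intro i _; positivity),
      ← Fin.sum_univ_eq_sum_range
        (fun x => ENNReal.ofReal
          (if (x : ℝ) ≤ A then p ^ x * (1 - p) ^ (m - x) * (m.choose x : ℝ) else 0)) (m + 1)]
    apply Finset.sum_congr rfl
    intro x _
    rw [Set.indicator_apply]
    simp only [Set.mem_setOf_eq]
    split_ifs with hx
    · rw [PMF.binomial_apply, Fin.val_last,
        show (1 : ℝ≥0∞) - ((Real.toNNReal p : NNReal) : ℝ≥0∞) = ENNReal.ofReal (1 - p) by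
          rw [ENNReal.ofReal_sub 1 hp0, ENNReal.ofReal_one]; rfl,
        ENNReal.ofReal_mul (by positivity), ENNReal.ofReal_mul (by positivity),
        ENNReal.ofReal_pow hp0, ENNReal.ofReal_pow hq0, ENNReal.ofReal_natCast, ENNReal.ofReal]
      rfl
    · exact ENNReal.ofReal_zero.symm
  rw [hsum]
  exact ENNReal.ofReal_le_ofReal (binomial_lower_tail_sum m p t A hp0 hp1 ht)

/-- The exponent optimization for `t = -ε/2`. -/
theorem rank_selection_exponent (c ε L mp : ℝ) (hc : 3 ≤ c) (hε0 : 0 < ε)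
    (hε1 : ε ≤ 1) (hL : 0 ≤ L) (hmp : c * (1 + ε) * L ≤ mp) :
    -(-(ε / 2) * (c * L)) + mp * (Real.exp (-(ε / 2)) - 1)
      ≤ -(c * ε ^ 2 / 4) * L := by
  have hq := Real.quadratic_le_exp_of_nonneg (show (0:ℝ) ≤ ε / 2 by linarith)
  have hmul : Real.exp (-(ε / 2)) * Real.exp (ε / 2) = 1 := by
    rw [← Real.exp_add]; simp
  have hepos := Real.exp_pos (ε / 2)
  have hpos2 : 0 < 1 - ε / 2 + ε ^ 2 / 8 := by nlinarith
  have hne : Real.exp (-(ε / 2)) ≤ 1 - ε / 2 + ε ^ 2 / 8 := by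
    nlinarith [Real.exp_pos (-(ε / 2))]
  have ht1 : Real.exp (-(ε / 2)) - 1 ≤ -(ε / 2) + ε ^ 2 / 8 := by linarith
  have ht0 : -(ε / 2) + ε ^ 2 / 8 ≤ 0 := by nlinarith
  have hcL : 0 ≤ c * (1 + ε) * L := by
    apply mul_nonneg (mul_nonneg (by linarith) (by linarith)) hL
  have h1 : mp * (Real.exp (-(ε / 2)) - 1) ≤ c * (1 + ε) * L * (Real.exp (-(ε / 2)) - 1) :=
    mul_le_mul_of_nonpos_right hmp (by linarith)
  have h2 : c * (1 + ε) * L * (Real.exp (-(ε / 2)) - 1)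
      ≤ c * (1 + ε) * L * (-(ε / 2) + ε ^ 2 / 8) :=
    mul_le_mul_of_nonneg_left ht1 hcL
  have h3 : 0 ≤ c * L * (ε ^ 2 * (1 - ε)) := by
    apply mul_nonneg (mul_nonneg (by linarith) hL)
    nlinarith [sq_nonneg ε]
  nlinarith [h1, h2, h3]

/-- Lower-tail bound used to show the number of active elements shrinks
quickly in the rank-selection algorithm: for `X ~ Binomial(m, c/√N)` with
`m ≥ (1+ε)·N^{3/4}·√(ln n)`, the probability that
`X ≤ c·N^{1/4}·√(ln n)` is at most `exp(−(c·ε²/4)·N^{1/4}·√(ln n))`. -/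
theorem rank_selection_shrinkage
    (n : ℕ) (hn : 2 ≤ n) (c ε : ℝ) (hc : 3 ≤ c) (hε0 : 0 < ε) (hε1 : ε ≤ 1)
    (N m : ℕ) (hN : 0 < N) (hm : 0 < m)
    (hcN : c ^ 2 ≤ (N : ℝ)) (hNn : N ≤ n)
    (hmlb : (1 + ε) * (N : ℝ) ^ ((3 : ℝ) / 4) * Real.sqrt (Real.log n)
      ≤ (m : ℝ)) :
    (PMF.binomial (Real.toNNReal (c / Real.sqrt N))
        (by
          rw [Real.toNNReal_le_one]
          have hc0 : (0 : ℝ) ≤ c := by linarith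
          have h1 : c ≤ Real.sqrt N := by
            have := Real.sqrt_le_sqrt hcN
            rwa [Real.sqrt_sq hc0] at this
          have h2 : (0 : ℝ) < Real.sqrt N := lt_of_lt_of_le (by linarith) h1
          exact div_le_one_of_le₀ h1 h2.le) m).toMeasure
      {x : Fin (m + 1) |
        ((x : ℕ) : ℝ) ≤ c * (N : ℝ) ^ ((1 : ℝ) / 4) * Real.sqrt (Real.log n)}
      ≤ ENNReal.ofReal
          (Real.exp (-(c * ε ^ 2 / 4) * (N : ℝ) ^ ((1 : ℝ) / 4) *
            Real.sqrt (Real.log n))) := by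
  have hc0 : (0:ℝ) < c := by linarith
  have hNpos : (0:ℝ) < (N:ℝ) := by exact_mod_cast hN
  have hsqrtN : (0:ℝ) < Real.sqrt N := Real.sqrt_pos.2 hNpos
  have hp0 : (0:ℝ) ≤ c / Real.sqrt N := by positivity
  have hp1 : c / Real.sqrt N ≤ 1 := by
    have h1 : c ≤ Real.sqrt N := by
      have := Real.sqrt_le_sqrt hcN
      rwa [Real.sqrt_sq hc0.le] at this
    exact div_le_one_of_le₀ h1 hsqrtN.le
  have hL0 : (0:ℝ) ≤ (N : ℝ) ^ ((1 : ℝ) / 4) * Real.sqrt (Real.log n) := by positivity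
  -- lower bound on the mean
  have hmp : c * (1 + ε) * ((N : ℝ) ^ ((1 : ℝ) / 4) * Real.sqrt (Real.log n))
      ≤ (m : ℝ) * (c / Real.sqrt N) := by
    have hrp : (0:ℝ) < (N:ℝ) ^ ((1:ℝ)/2) := Real.rpow_pos_of_pos hNpos _
    have hs : Real.sqrt (N:ℝ) = (N:ℝ) ^ ((1:ℝ)/2) := Real.sqrt_eq_rpow _
    have h34 : (N:ℝ) ^ ((3:ℝ)/4) = (N:ℝ) ^ ((1:ℝ)/4) * (N:ℝ) ^ ((1:ℝ)/2) := by
      rw [← Real.rpow_add hNpos]; norm_num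
    have hkey : c * (1 + ε) * ((N : ℝ) ^ ((1 : ℝ) / 4) * Real.sqrt (Real.log n))
        = (1 + ε) * (N : ℝ) ^ ((3 : ℝ) / 4) * Real.sqrt (Real.log n) * (c / Real.sqrt N) := by
      rw [hs, h34]
      field_simp
    rw [hkey]
    exact mul_le_mul_of_nonneg_right hmlb hp0
  refine le_trans
    (binomial_lower_tail m (c / Real.sqrt N)
      (c * (N : ℝ) ^ ((1 : ℝ) / 4) * Real.sqrt (Real.log n)) (-(ε / 2)) hp0 hp1
      (by linarith) _) ?_
  apply ENNReal.ofReal_le_ofReal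
  apply Real.exp_le_exp.2
  have := rank_selection_exponent c ε ((N : ℝ) ^ ((1 : ℝ) / 4) * Real.sqrt (Real.log n))
    ((m : ℝ) * (c / Real.sqrt N)) hc hε0 hε1 hL0 hmp
  calc -(-(ε / 2) * (c * (N : ℝ) ^ ((1 : ℝ) / 4) * Real.sqrt (Real.log n)))
        + (m:ℝ) * (c / Real.sqrt N) * (Real.exp (-(ε / 2)) - 1)
      ≤ -(c * ε ^ 2 / 4) * ((N : ℝ) ^ ((1 : ℝ) / 4) * Real.sqrt (Real.log n)) := by
        rw [show -(-(ε / 2) * (c * (N : ℝ) ^ ((1 : ℝ) / 4) * Real.sqrt (Real.log n)))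
            = -(-(ε / 2) * (c * ((N : ℝ) ^ ((1 : ℝ) / 4) * Real.sqrt (Real.log n)))) by ring]
        exact this
    _ = -(c * ε ^ 2 / 4) * (N : ℝ) ^ ((1 : ℝ) / 4) * Real.sqrt (Real.log n) := by ring
end
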